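/- Counting lemma: let J ⊆ ℕᵐ be a finite decreasing set and S₁,...,Sₘ ⊆ F finite nonempty sets. Define J_S = {i ∈ ℕᵐ : i ⋡ (r₁#S₁,...,rₘ#Sₘ) for all (r₁,...,rₘ) ∉ J}. Then #J_S = #S₁·#S₂···#Sₘ · #J. -/

import Mathlib

/-- Counting lemma: `#J_S = #S₁ ⋯ #Sₘ ⋅ #J` for a finite decreasing set `J` and nonempty
finite sets `S₁,…,Sₘ`. -/
theorem JS_card {K : Type*} [Field K] {m : ℕ} (J : Finset (Fin m →₀ ℕ))
    (hJ : ∀ i ∈ J, ∀ k : Fin m →₀ ℕ, k ≤ i → k ∈ J)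
    (S : Fin m → Finset K) (hS : ∀ j, (S j).Nonempty) :
    {i : Fin m →₀ ℕ | ∀ r : Fin m →₀ ℕ, r ∉ J →
        ¬ (∀ j, r j * (S j).card ≤ i j)}.encard
      = ((∏ j, (S j).card : ℕ) * J.card : ℕ) := by
  set c : Fin m → ℕ := fun j => (S j).card with hc
  have hcpos : ∀ j, 0 < c j := fun j => Finset.card_pos.2 (hS j)
  -- the box over r
  set box : (Fin m →₀ ℕ) → Finset (Fin m →₀ ℕ) := fun r =>
    (Fintype.piFinset fun j => Finset.Ico (r j * c j) (r j * c j + c j)).map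
      (Finsupp.equivFunOnFinite.symm.toEmbedding) with hbox
  have hmem : ∀ r i, i ∈ box r ↔ ∀ j, r j * c j ≤ i j ∧ i j < r j * c j + c j := by
    intro r i
    simp [hbox, Finset.mem_map_equiv, Fintype.mem_piFinset, Finset.mem_Ico]
  set T : Finset (Fin m →₀ ℕ) := J.biUnion box with hT
  have hfloor : ∀ r i, i ∈ box r → ∀ j, i j / c j = r j := by
    intro r i hi j
    obtain ⟨h1, h2⟩ := (hmem r i).1 hi j
    exact Nat.div_eq_of_lt_le h1 (by rw [Nat.succ_mul]; omega)
  have hsetT : {i : Fin m →₀ ℕ | ∀ r : Fin m →₀ ℕ, r ∉ J →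
        ¬ (∀ j, r j * (S j).card ≤ i j)} = ↑T := by
    ext i
    simp only [Set.mem_setOf_eq, Finset.coe_biUnion, Set.mem_iUnion, Finset.mem_coe, hT,
      Finset.mem_biUnion]
    constructor
    · intro h
      set q : Fin m →₀ ℕ := Finsupp.equivFunOnFinite.symm (fun j => i j / c j) with hq
      have hqj : ∀ j, q j = i j / c j := fun j => rfl
      have hqJ : q ∈ J := by
        by_contra hqJ
        exact h q hqJ (fun j => by rw [hqj]; exact Nat.div_mul_le_self _ _)
      exact ⟨q, hqJ, (hmem q i).2 fun j => by
        rw [hqj]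
        exact ⟨Nat.div_mul_le_self _ _, Nat.lt_div_mul_add (hcpos j)⟩⟩
    · rintro ⟨r, hrJ, hib⟩ r' hr' hle
      apply hr'
      apply hJ r hrJ
      intro j
      have := hfloor r i hib j
      have h2 := hle j
      rw [← this]
      exact Nat.le_div_iff_mul_le (hcpos j) |>.2 h2
  rw [hsetT, Set.encard_coe_eq_coe_finsetCard]
  norm_cast
  rw [hT, Finset.card_biUnion, Finset.sum_congr rfl (fun r _ => ?_), Finset.sum_const,
    smul_eq_mul, mul_comm]
  · simp [hbox, Fintype.card_piFinset]
  · intro r hr s hs hrs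
    rw [Function.onFun, Finset.disjoint_left]
    intro i hir his
    apply hrs
    ext j
    rw [← hfloor r i hir j, hfloor s i his j]
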